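/- A characteristic sample determines the machine among machines of minimal size (abstract form of the characteristic sample requirement): if M = (I,O,Q,q0,δ,λ) is a minimal Moore machine, S_IO is a characteristic sample for M, and M' = (I,O,Q',q0',δ',λ') is a complete Moore machine over the same alphabets I and O with |Q'| = |Q| that is consistent with every trace in S_IO, then M' is equivalent to M, i.e., λ'*(q0',w) = λ*(q0,w) for every w ∈ I*. -/

import Mathlib

/-- A (complete, deterministic) Moore machine with input alphabet `I`,
output alphabet `O`, state set `Q`, initial state `init`, total transition
function `trans` and total output function `out`. -/
structure Moore (I O Q : Type) where
  init : Q
  trans : Q → I → Q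
  out : Q → O

namespace Moore

variable {I O Q : Type}

/-- Extended transition function: `δ*(q,ε)=q` and `δ*(q,w·a)=δ(δ*(q,w),a)`. -/
def deltaStar (M : Moore I O Q) (q : Q) (w : List I) : Q :=
  w.foldl M.trans q

/-- Extended output function: `λ*(q,w)` lists the output `λ(δ*(q,u))` for
every prefix `u` of `w` in order; this satisfies `λ*(q,ε)=λ(q)` and
`λ*(q,w·a)=λ*(q,w)·λ(δ*(q,w·a))`. -/
def lambdaStar (M : Moore I O Q) (q : Q) (w : List I) : List O :=
  w.inits.map fun u => M.out (M.deltaStar q u)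

/-- Two Moore machines over the same alphabets are equivalent iff they produce
the same output word on every input word. -/
def Equivalent {Q' : Type} (M : Moore I O Q) (M' : Moore I O Q') : Prop :=
  ∀ w : List I, M.lambdaStar M.init w = M'.lambdaStar M'.init w

/-- `M` is minimal iff every Moore machine equivalent to `M` has at least as
many states. -/
def Minimal [Fintype Q] (M : Moore I O Q) : Prop :=
  ∀ (Q' : Type) [Fintype Q'] (M' : Moore I O Q'),
    M.Equivalent M' → Fintype.card Q ≤ Fintype.card Q'

end Moore

/-- Shortlex ("length then lexicographic") strict order on words. -/
def ShortlexLt {I : Type} [LinearOrder I] (w w' : List I) : Prop :=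
  w.length < w'.length ∨ (w.length = w'.length ∧ List.Lex (· < ·) w w')

/-- `w` is the shortlex-least element of the set `S` of words. -/
def IsShortlexLeast {I : Type} [LinearOrder I] (S : Set (List I)) (w : List I) : Prop :=
  w ∈ S ∧ ∀ v ∈ S, w = v ∨ ShortlexLt w v

/-- The set of all prefixes of words in `S`. -/
def wordPrefixes {I : Type} (S : Set (List I)) : Set (List I) :=
  {u | ∃ w ∈ S, u <+: w}

namespace Moore

variable {I O Q : Type}

/-- `SP` is the shortest-prefix map of `M`: for every state `q`, `SP q` is the
shortlex-least word reaching `q` from the initial state. -/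
def IsShortestPrefixMap [LinearOrder I] (M : Moore I O Q) (SP : Q → List I) : Prop :=
  ∀ q : Q, IsShortlexLeast {w | M.deltaStar M.init w = q} (SP q)

/-- The nucleus `N_L(M)`: the empty word together with all one-letter
extensions of shortest prefixes. -/
def nucleus (_M : Moore I O Q) (SP : Q → List I) : Set (List I) :=
  {[]} ∪ {w | ∃ q : Q, ∃ a : I, w = SP q ++ [a]}

/-- `MD` is a minimum-distinguishing-suffix map of `M`: for all distinct
states `qu qv`, `MD qu qv` is the shortlex-least word on which the outputs
from `qu` and from `qv` differ. -/
def IsMinDistSuffixMap [LinearOrder I] (M : Moore I O Q) (MD : Q → Q → List I) : Prop :=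
  ∀ qu qv : Q, qu ≠ qv →
    IsShortlexLeast {w | M.lambdaStar qu w ≠ M.lambdaStar qv w} (MD qu qv)

/-- `M` is consistent with the Moore `(I,O)`-trace `t = (ρI, ρO)` iff running
`M` on `ρI` from the initial state produces `ρO`. -/
def ConsistentTrace (M : Moore I O Q) (t : List I × List O) : Prop :=
  M.lambdaStar M.init t.1 = t.2

/-- `S` is a characteristic sample for `M` (with shortest-prefix map `SP` and
minimum-distinguishing-suffix map `MD`):
(1) the nucleus is contained in the prefixes of the input words of `S`, and
(2) for all `u ∈ S_P(M)` and `v ∈ N_L(M)` reaching different states, both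
`u·w` and `v·w` are prefixes of input words of `S`, where `w` is the minimum
distinguishing suffix of the two states. -/
def CharSample [LinearOrder I] (M : Moore I O Q) (SP : Q → List I)
    (MD : Q → Q → List I) (S : Set (List I × List O)) : Prop :=
  M.nucleus SP ⊆ wordPrefixes (Prod.fst '' S) ∧
  ∀ u ∈ Set.range SP, ∀ v ∈ M.nucleus SP,
    M.deltaStar M.init u ≠ M.deltaStar M.init v →
      u ++ MD (M.deltaStar M.init u) (M.deltaStar M.init v) ∈ wordPrefixes (Prod.fst '' S) ∧
      v ++ MD (M.deltaStar M.init u) (M.deltaStar M.init v) ∈ wordPrefixes (Prod.fst '' S)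

end Moore



namespace MooreAux

theorem shortlexLt_asymm {I : Type} [LinearOrder I] {w v : List I}
    (h : ShortlexLt w v) : ¬ ShortlexLt v w := by
  rintro (h2 | ⟨h2, h2'⟩) <;> rcases h with h1 | ⟨h1, h1'⟩
  · omega
  · omega
  · omega
  · exact (List.Lex.asymm (·<·)).asymm _ _ h1' h2'

theorem shortlexLt_total {I : Type} [LinearOrder I] {w v : List I}
    (h : w ≠ v) : ShortlexLt w v ∨ ShortlexLt v w := by
  rcases lt_trichotomy w.length v.length with h1 | h1 | h1
  · exact Or.inl (Or.inl h1)
  · rcases trichotomous_of (r := List.Lex (· < ·)) w v with h2 | h2 | h2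
    · exact Or.inl (Or.inr ⟨h1, h2⟩)
    · exact absurd h2 h
    · exact Or.inr (Or.inr ⟨h1.symm, h2⟩)
  · exact Or.inr (Or.inl h1)

theorem shortlexLt_nil {I : Type} [LinearOrder I] {w : List I}
    (h : ShortlexLt w []) : False := by
  rcases h with h | ⟨h, h'⟩
  · simp at h
  · exact List.not_lex_nil h'

theorem lex_append_of_length_eq {I : Type} {r : I → I → Prop} {w v : List I}
    (h : List.Lex r w v) (hl : w.length = v.length) (s : List I) :
    List.Lex r (w ++ s) (v ++ s) := by
  induction h with
  | nil => simp at hl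
  | @cons a l₁ l₂ h ih => exact List.Lex.cons (ih (by simpa using hl))
  | rel h => exact List.Lex.rel h

theorem shortlexLt_append {I : Type} [LinearOrder I] {w v : List I}
    (h : ShortlexLt w v) (s : List I) : ShortlexLt (w ++ s) (v ++ s) := by
  rcases h with h | ⟨h, h'⟩
  · exact Or.inl (by simp [h])
  · exact Or.inr ⟨by simp [h], lex_append_of_length_eq h' h s⟩

theorem isShortlexLeast_unique {I : Type} [LinearOrder I] {S : Set (List I)}
    {w v : List I} (hw : IsShortlexLeast S w) (hv : IsShortlexLeast S v) : w = v := by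
  rcases hw.2 v hv.1 with h | h
  · exact h
  · rcases hv.2 w hw.1 with h2 | h2
    · exact h2.symm
    · exact absurd h2 (shortlexLt_asymm h)

end MooreAux

namespace Moore

variable {I O Q : Type}

theorem deltaStar_nil' (M : Moore I O Q) (q : Q) : M.deltaStar q [] = q := rfl

theorem deltaStar_cons' (M : Moore I O Q) (q : Q) (a : I) (w : List I) :
    M.deltaStar q (a :: w) = M.deltaStar (M.trans q a) w := rfl

theorem deltaStar_append' (M : Moore I O Q) (q : Q) (u w : List I) :
    M.deltaStar q (u ++ w) = M.deltaStar (M.deltaStar q u) w :=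
  List.foldl_append

theorem lambdaStar_nil' (M : Moore I O Q) (q : Q) : M.lambdaStar q [] = [M.out q] := rfl

theorem lambdaStar_cons' (M : Moore I O Q) (q : Q) (a : I) (w : List I) :
    M.lambdaStar q (a :: w) = M.out q :: (M.lambdaStar (M.trans q a) w) := by
  simp [lambdaStar, List.inits_cons, Function.comp, deltaStar_cons', deltaStar_nil']

theorem lambdaStar_drop' (M : Moore I O Q) (q : Q) (u w : List I) :
    M.lambdaStar (M.deltaStar q u) w = (M.lambdaStar q (u ++ w)).drop u.length := by
  induction u generalizing q with
  | nil => simp [deltaStar_nil']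
  | cons a u ih => simpa [deltaStar_cons', lambdaStar_cons'] using ih (M.trans q a)

theorem lambdaStar_take' (M : Moore I O Q) (q : Q) (u w : List I) :
    M.lambdaStar q u = (M.lambdaStar q (u ++ w)).take (u.length + 1) := by
  induction u generalizing q with
  | nil =>
    cases w with
    | nil => simp [lambdaStar_nil']
    | cons b w => simp [lambdaStar_nil', lambdaStar_cons']
  | cons a u ih =>
    simpa [lambdaStar_cons'] using ih (M.trans q a)

theorem lambdaStar_eq_of_prefix {Q' : Type} (M : Moore I O Q) (M' : Moore I O Q')
    {x : List I} (h : M.lambdaStar M.init x = M'.lambdaStar M'.init x)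
    {u : List I} (hu : u <+: x) :
    M.lambdaStar M.init u = M'.lambdaStar M'.init u := by
  obtain ⟨r, rfl⟩ := hu
  rw [lambdaStar_take' M _ u r, lambdaStar_take' M' _ u r, h]

end Moore


/-- A characteristic sample determines the machine among
machines of minimal size: any complete Moore machine with `|Q'| = |Q|` states
consistent with a characteristic sample of a minimal machine `M` is
equivalent to `M`. -/
theorem charSample_determines_machine {I O Q Q' : Type} [LinearOrder I]
    [Fintype I] [Fintype O] [Fintype Q] [Fintype Q']
    (M : Moore I O Q) (hmin : M.Minimal)
    (SP : Q → List I) (hSP : M.IsShortestPrefixMap SP)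
    (MD : Q → Q → List I) (hMD : M.IsMinDistSuffixMap MD)
    (S : Set (List I × List O)) (hfin : S.Finite)
    (hcons : ∀ t ∈ S, M.ConsistentTrace t)
    (hCS : M.CharSample SP MD S)
    (M' : Moore I O Q') (hcons' : ∀ t ∈ S, M'.ConsistentTrace t)
    (hcard : Fintype.card Q' = Fintype.card Q) :
    ∀ w : List I, M'.lambdaStar M'.init w = M.lambdaStar M.init w := by
  classical
  have hreach : ∀ q, M.deltaStar M.init (SP q) = q := fun q => (hSP q).1
  -- transfer along the sample
  have htransfer : ∀ p ∈ wordPrefixes (Prod.fst '' S),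
      M'.lambdaStar M'.init p = M.lambdaStar M.init p := by
    rintro p ⟨x, ⟨t, ht, rfl⟩, hpx⟩
    exact Moore.lambdaStar_eq_of_prefix M' M
      (((hcons' t ht).trans (hcons t ht).symm)) hpx
  have hext : ∀ u w, (u ++ w) ∈ wordPrefixes (Prod.fst '' S) →
      M'.lambdaStar (M'.deltaStar M'.init u) w
        = M.lambdaStar (M.deltaStar M.init u) w := by
    intro u w hm
    rw [Moore.lambdaStar_drop', Moore.lambdaStar_drop', htransfer _ hm]
  -- SP is prefix closed: every shortest prefix lies in the nucleus
  have hnuc : ∀ q, SP q ∈ M.nucleus SP := by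
    intro q
    rcases List.eq_nil_or_concat (SP q) with h | ⟨w, a, h⟩
    · exact Or.inl h
    rw [List.concat_eq_append] at h
    · refine Or.inr ⟨M.deltaStar M.init w, a, ?_⟩
      have hperf : IsShortlexLeast
          {w' | M.deltaStar M.init w' = M.deltaStar M.init w} w := by
        refine ⟨rfl, ?_⟩
        intro w' hw'
        rcases eq_or_ne w w' with rfl | hne
        · exact Or.inl rfl
        rcases MooreAux.shortlexLt_total hne with h1 | h1
        · exact Or.inr h1
        exfalso
        have hr : M.deltaStar M.init (w' ++ [a]) = q := by
          rw [Moore.deltaStar_append', hw', ← Moore.deltaStar_append', ← h, hreach]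
        have hlt : ShortlexLt (w' ++ [a]) (SP q) := by
          rw [h]; exact MooreAux.shortlexLt_append h1 [a]
        rcases (hSP q).2 _ hr with heq | hlt'
        · apply hne
          have : w ++ [a] = w' ++ [a] := by rw [← h, heq]
          simpa using this
        · exact MooreAux.shortlexLt_asymm hlt hlt'
      have hw : w = SP (M.deltaStar M.init w) :=
        MooreAux.isShortlexLeast_unique hperf (hSP (M.deltaStar M.init w))
      rw [h, ← hw]
  set f : Q → Q' := fun q => M'.deltaStar M'.init (SP q) with hf
  have hfinj : Function.Injective f := by
    intro q1 q2 hfq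
    by_contra hne
    obtain ⟨hm1, hm2⟩ := hCS.2 (SP q1) ⟨q1, rfl⟩ (SP q2) (hnuc q2)
      (by rw [hreach, hreach]; exact hne)
    simp only [hreach] at hm1 hm2
    have h1 := hext (SP q1) _ hm1
    have h2 := hext (SP q2) _ hm2
    rw [hreach] at h1
    rw [hreach] at h2
    have hfq' : M'.deltaStar M'.init (SP q1) = M'.deltaStar M'.init (SP q2) := hfq
    exact (hMD q1 q2 hne).1 (by rw [← h1, ← h2, hfq'])
  have hfbij : Function.Bijective f :=
    (Fintype.bijective_iff_injective_and_card f).2 ⟨hfinj, hcard.symm⟩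
  have hout : ∀ q, M'.out (f q) = M.out q := by
    intro q
    have hmem : SP q ++ [] ∈ wordPrefixes (Prod.fst '' S) := by
      simpa using hCS.1 (hnuc q)
    have h := hext (SP q) [] hmem
    rw [hreach] at h
    rw [Moore.lambdaStar_nil', Moore.lambdaStar_nil'] at h
    simpa using h
  have htr : ∀ q a, M'.trans (f q) a = f (M.trans q a) := by
    intro q a
    have hv : SP q ++ [a] ∈ M.nucleus SP := Or.inr ⟨q, a, rfl⟩
    have hq2 : M.deltaStar M.init (SP q ++ [a]) = M.trans q a := by
      rw [Moore.deltaStar_append', hreach]; rfl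
    obtain ⟨q3, hq3⟩ := hfbij.2 (M'.deltaStar M'.init (SP q ++ [a]))
    have hq3eq : q3 = M.trans q a := by
      by_contra hne
      obtain ⟨hm1, hm2⟩ := hCS.2 (SP q3) ⟨q3, rfl⟩ (SP q ++ [a]) hv
        (by rw [hreach, hq2]; exact hne)
      simp only [hreach, hq2] at hm1 hm2
      have h1 := hext (SP q3) _ hm1
      have h2 := hext (SP q ++ [a]) _ hm2
      rw [hreach] at h1
      rw [hq2] at h2
      have hq3' : M'.deltaStar M'.init (SP q3)
          = M'.deltaStar M'.init (SP q ++ [a]) := hq3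
      rw [← hq3'] at h2
      exact (hMD q3 (M.trans q a) hne).1 (by rw [← h1, ← h2])
    rw [hq3eq] at hq3
    rw [hq3, Moore.deltaStar_append']
    rfl
  have hinit : f M.init = M'.init := by
    have hSPinit : SP M.init = [] := by
      rcases (hSP M.init).2 [] rfl with h | h
      · exact h
      · exact absurd h MooreAux.shortlexLt_nil
    rw [hf]; simp only [hSPinit]; rfl
  have main : ∀ (w : List I) (q : Q), M'.lambdaStar (f q) w = M.lambdaStar q w := by
    intro w
    induction w with
    | nil => intro q; rw [Moore.lambdaStar_nil', Moore.lambdaStar_nil', hout]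
    | cons a w ih =>
      intro q
      rw [Moore.lambdaStar_cons', Moore.lambdaStar_cons', hout, htr, ih]
  intro w
  rw [← hinit, main]
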